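/- Let F be a linear ordered field equipped with its order topology and X a completely F-regular space such that C(X,F) is von Neumann regular (i.e., X is a P_F-space). Then for an intermediate ring A(X,F), the following are equivalent: (1) A(X,F) = C(X,F); (2) every proper ideal of A(X,F) is a z°-ideal. -/

import Mathlib

open Set

/-- `Pz a` : the intersection of all minimal prime ideals of `R` which contain `a`. -/
def Pz {R : Type*} [CommRing R] (a : R) : Set R :=
  ⋂ P ∈ {P : Ideal R | P ∈ minimalPrimes R ∧ a ∈ P}, (P : Set R)

/-- A proper ideal `I` is a `z°`-ideal if `Pz a ⊆ I` for every `a ∈ I`. -/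
def IsZoIdeal {R : Type*} [CommRing R] (I : Ideal R) : Prop :=
  I ≠ ⊤ ∧ ∀ a ∈ I, Pz a ⊆ (I : Set R)

/-- The zero set `Z(f)` of a continuous function `f`. -/
def ZSet {X F : Type*} [TopologicalSpace X] [TopologicalSpace F] [Zero F]
    (f : C(X, F)) : Set X := {x | f x = 0}

/-- `f` is bounded over `X` (i.e. `f ∈ B(X,F)`). -/
def BddF {X F : Type*} [TopologicalSpace X] [Field F] [LinearOrder F] [IsStrictOrderedRing F] [TopologicalSpace F]
    (f : C(X, F)) : Prop := ∃ l : F, 0 < l ∧ ∀ x, |f x| ≤ l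

/-- `X` is completely `F`-regular: Hausdorff, and points can be separated from closed
sets by bounded `F`-valued continuous functions. -/
def CompletelyFRegular (X F : Type*) [TopologicalSpace X] [Field F] [LinearOrder F] [IsStrictOrderedRing F]
    [TopologicalSpace F] : Prop :=
  T2Space X ∧ ∀ K : Set X, IsClosed K → ∀ x ∉ K, ∃ f : C(X, F),
    BddF f ∧ f x = 0 ∧ ∀ k ∈ K, f k = 1

/-- `A` is an intermediate ring: a subring of `C(X,F)` containing all of `B(X,F)`. -/
def IsIntermediate {X F : Type*} [TopologicalSpace X] [Field F] [LinearOrder F] [IsStrictOrderedRing F]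
    [TopologicalSpace F] [OrderTopology F] (A : Subring C(X, F)) : Prop :=
  ∀ f : C(X, F), BddF f → f ∈ A

/-- An ideal of closed sets in `X`: a nonempty family of closed sets, closed under
finite unions and under passing to closed subsets. -/
def IsIdealOfClosedSets {X : Type*} [TopologicalSpace X] (P : Set (Set X)) : Prop :=
  P.Nonempty ∧ (∀ A ∈ P, IsClosed A) ∧ (∀ A ∈ P, ∀ B ∈ P, A ∪ B ∈ P) ∧
    ∀ C : Set X, IsClosed C → ∀ A ∈ P, C ⊆ A → C ∈ P

/-- `X` is an almost `P_F`-space: every nonempty zero set has nonempty interior. -/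
def AlmostPF (X F : Type*) [TopologicalSpace X] [Field F] [LinearOrder F] [IsStrictOrderedRing F]
    [TopologicalSpace F] : Prop :=
  ∀ f : C(X, F), (ZSet f).Nonempty → (interior (ZSet f)).Nonempty


section Aux

/-- In a von Neumann regular commutative ring, every prime is a minimal prime. -/
theorem vnr_prime_minimal {R : Type*} [CommRing R]
    (hVNR : ∀ a : R, ∃ b : R, a = a * b * a) (P : Ideal R) (hP : P.IsPrime) :
    P ∈ minimalPrimes R := by
  refine ⟨⟨hP, bot_le⟩, ?_⟩
  rintro Q ⟨hQ, -⟩ hQP y hyP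
  obtain ⟨b, hb⟩ := hVNR y
  have h0 : y * (1 - b * y) = 0 := by
    have : y * (1 - b * y) = y - y * b * y := by ring
    rw [this, ← hb, sub_self]
  rcases hQ.mem_or_mem (h0 ▸ Q.zero_mem : y * (1 - b * y) ∈ Q) with h | h
  · exact h
  · exfalso
    have h1 : (1 : R) ∈ P := by
      have : (1 - b * y) + b * y ∈ P := P.add_mem (hQP h) (P.mul_mem_left b hyP)
      simpa using this
    exact hP.ne_top (Ideal.eq_top_iff_one P |>.mpr h1)

/-- In a von Neumann regular commutative ring, every ideal has the `z°` property. -/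
theorem vnr_zo {R : Type*} [CommRing R]
    (hVNR : ∀ a : R, ∃ b : R, a = a * b * a) (I : Ideal R) (a : R) (ha : a ∈ I) :
    Pz a ⊆ (I : Set R) := by
  intro x hx
  have hxrad : x ∈ (Ideal.span {a}).radical := by
    rw [Ideal.radical_eq_sInf]
    refine Submodule.mem_sInf.mpr ?_
    rintro J ⟨hJle, hJprime⟩
    have haJ : a ∈ J := hJle (Ideal.mem_span_singleton_self a)
    have := Set.mem_iInter₂.mp hx J ⟨vnr_prime_minimal hVNR J hJprime, haJ⟩
    exact this
  obtain ⟨n, hxn⟩ := hxrad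
  have hxnI : x ^ n ∈ I := Ideal.span_le.mpr (Set.singleton_subset_iff.mpr ha) hxn
  obtain ⟨b, hb⟩ := hVNR x
  have key : ∀ m : ℕ, x * (b * x) ^ m = x := by
    intro m
    induction m with
    | zero => simp
    | succ k ih =>
      rw [pow_succ, ← mul_assoc, ih, ← mul_assoc, ← hb]
  have hxeq : x = (x * b ^ n) * x ^ n := by
    have hthis := key n
    rw [mul_pow] at hthis
    linear_combination -hthis
  rw [hxeq]
  exact I.mul_mem_left _ hxnI

end Aux

set_option maxHeartbeats 2000000 in
set_option synthInstance.maxHeartbeats 1000000 in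
/-- For a P_F-space X and an intermediate ring A(X,F): A(X,F) = C(X,F) iff
every proper ideal of A(X,F) is a z°-ideal. -/
theorem stmt8 {X F : Type*} [TopologicalSpace X] [Field F] [LinearOrder F] [IsStrictOrderedRing F]
    [TopologicalSpace F] [OrderTopology F]
    (hX : CompletelyFRegular X F)
    (hPF : ∀ f : C(X, F), ∃ g : C(X, F), f = f * g * f)
    (A : Subring C(X, F)) (hA : IsIntermediate A) :
    A = ⊤ ↔ ∀ I : Ideal A, I ≠ ⊤ → ∀ a ∈ I, Pz a ⊆ (I : Set A) := by
  constructor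
  · rintro rfl
    intro I _ a ha
    refine vnr_zo ?_ I a ha
    intro c
    obtain ⟨g, hg⟩ := hPF (c : C(X, F))
    exact ⟨⟨g, Subring.mem_top g⟩, Subtype.ext hg⟩
  · intro hzo
    rw [Subring.eq_top_iff']
    intro f
    -- the bounded function h = (1 + f²)⁻¹
    have hpos : ∀ x, (0 : F) < 1 + f x * f x := by
      intro x; nlinarith [mul_self_nonneg (f x)]
    have hcont : Continuous fun x => (1 + f x * f x)⁻¹ :=
      (continuous_const.add (f.continuous.mul f.continuous)).inv₀
        fun x => ne_of_gt (hpos x)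
    set h : C(X, F) := ⟨fun x => (1 + f x * f x)⁻¹, hcont⟩ with hh
    have hx_pos : ∀ x, 0 < h x := fun x => inv_pos.mpr (hpos x)
    have hbdd_h : BddF h := by
      refine ⟨1, one_pos, fun x => ?_⟩
      rw [abs_of_pos (hx_pos x)]
      exact inv_le_one_of_one_le₀ (by nlinarith [mul_self_nonneg (f x)])
    have habs : ∀ x, |f x| ≤ 1 + f x * f x := by
      intro x
      nlinarith [abs_nonneg (f x), abs_mul_abs_self (f x)]
    have hbdd_g : BddF (f * h) := by
      refine ⟨1, one_pos, fun x => ?_⟩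
      have : (f * h) x = f x * (1 + f x * f x)⁻¹ := rfl
      rw [this, abs_mul, abs_of_pos (inv_pos.mpr (hpos x)), ← div_eq_mul_inv,
        div_le_one (hpos x)]
      exact habs x
    have hmemh : h ∈ A := hA h hbdd_h
    have hmemg : f * h ∈ A := hA (f * h) hbdd_g
    set hA' : A := ⟨h, hmemh⟩ with hhA'
    set gA : A := ⟨f * h, hmemg⟩ with hgA
    -- h is a unit in A
    have hspan : Ideal.span ({hA'} : Set A) = ⊤ := by
      by_contra hne
      have hsub := hzo _ hne hA' (Ideal.mem_span_singleton_self hA')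
      -- no minimal prime of A contains hA'
      have noMin : ∀ P : Ideal A, P ∈ minimalPrimes A → hA' ∉ P := by
        intro P hPmin hhP
        have hPprime : P.IsPrime := hPmin.1.1
        -- the submonoid of elements t * hA'^n with t ∉ P
        let S : Submonoid A :=
          { carrier := {s | ∃ t : A, t ∉ P ∧ ∃ n : ℕ, s = t * hA' ^ n}
            one_mem' := ⟨1, fun hc => hPprime.ne_top (Ideal.eq_top_iff_one P |>.mpr hc),
              0, by simp⟩
            mul_mem' := by
              rintro a b ⟨t₁, ht₁, n₁, rfl⟩ ⟨t₂, ht₂, n₂, rfl⟩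
              refine ⟨t₁ * t₂, fun hc => ?_, n₁ + n₂, by ring⟩
              rcases hPprime.mem_or_mem hc with hc | hc
              exacts [ht₁ hc, ht₂ hc] }
        have hzero : (0 : A) ∉ S := by
          rintro ⟨t, htP, n, ht0⟩
          apply htP
          have hval : (0 : C(X, F)) = (t : C(X, F)) * h ^ n := by
            have hv := congrArg (Subtype.val) ht0
            push_cast at hv
            exact hv
          have ht' : t = 0 := by
            refine Subtype.ext (ContinuousMap.ext fun x => ?_)
            have hv2 := congrArg (fun u : C(X, F) => u x) hval
            simp only [ContinuousMap.zero_apply, ContinuousMap.mul_apply,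
              ContinuousMap.pow_apply] at hv2
            have hne' : (h x) ^ n ≠ 0 := pow_ne_zero n (ne_of_gt (hx_pos x))
            rcases mul_eq_zero.mp hv2.symm with h' | h'
            · exact h'
            · exact absurd h' hne'
          rw [ht']
          exact P.zero_mem
        have hdisj : Disjoint ((⊥ : Ideal A) : Set A) (S : Set A) := by
          rw [Set.disjoint_left]
          rintro a ha haS
          simp only [SetLike.mem_coe, Ideal.mem_bot] at ha
          exact hzero (ha ▸ haS)
        obtain ⟨Q, hQprime, -, hQdisj⟩ := Ideal.exists_le_prime_disjoint ⊥ S hdisj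
        have hQP : Q ≤ P := by
          intro q hq
          by_contra hqP
          exact Set.disjoint_left.mp hQdisj hq ⟨q, hqP, 0, by simp⟩
        have hPQ : P ≤ Q := hPmin.2 ⟨hQprime, bot_le⟩ hQP
        have : hA' ∈ Q := hPQ hhP
        exact Set.disjoint_left.mp hQdisj this
          ⟨1, fun hc => hPprime.ne_top (Ideal.eq_top_iff_one P |>.mpr hc), 1, by simp⟩
      have h1 : (1 : A) ∈ Pz hA' := by
        refine Set.mem_iInter₂.mpr ?_
        rintro P ⟨hPmin, hhP⟩
        exact absurd hhP (noMin P hPmin)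
      exact hne (Ideal.eq_top_iff_one _ |>.mpr (hsub h1))
    have hunit : IsUnit hA' := Ideal.span_singleton_eq_top.mp hspan
    obtain ⟨u, hu⟩ := hunit
    -- f = (f*h) * u⁻¹
    have hinv : (hA' : C(X, F)) * ((u⁻¹ : Aˣ) : A) = 1 := by
      have : (u : A) * (u⁻¹ : Aˣ) = 1 := u.mul_inv
      rw [hu] at this
      exact_mod_cast congrArg (Subtype.val) this
    have hfeq : ((gA * ((u⁻¹ : Aˣ) : A) : A) : C(X, F)) = f := by
      push_cast
      calc (f * h) * ((u⁻¹ : Aˣ) : A) = f * ((hA' : C(X, F)) * ((u⁻¹ : Aˣ) : A)) := by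
            rw [hhA']; ring
        _ = f := by rw [hinv, mul_one]
    rw [← hfeq]
    exact (gA * ((u⁻¹ : Aˣ) : A)).2
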